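/- Let a_n > 0 with a_n → a ∈ [0, ∞) as n → ∞, and fix an integer r ≥ 0. For the dynamic geometric distribution with parameter a_n, the quantity s²_{r,n} satisfies: 2·max{0, a(r+1) − (r+1)^{r+1}e^{−(r+1)} − (r+2)^{r+2}e^{−(r+2)}} ≤ liminf_{n→∞} s²_{r,n} ≤ limsup_{n→∞} s²_{r,n} ≤ 2a(r+1) + 2(r+1)^{r+1}e^{−(r+1)} + 2(r+2)^{r+2}e^{−(r+2)}. -/

import Mathlib

open MeasureTheory ProbabilityTheory Filter Topology
open scoped NNReal

noncomputable section

/-- pmf of the dynamic geometric distribution with parameter `a`: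
`p_ℓ = (e^{1/a} - 1) e^{-ℓ/a}` for `ℓ = 1, 2, …` (letter `0` is not used). -/
def geomPMF (a : ℝ) (ℓ : ℕ) : ℝ :=
  if ℓ = 0 then 0 else (Real.exp (1 / a) - 1) * Real.exp (-(ℓ : ℝ) / a)

/-- pmf of the fixed geometric distribution: `p_ℓ = p (1-p)^{ℓ-1}` for `ℓ = 1, 2, …`. -/
def fixedGeomPMF (p : ℝ) (ℓ : ℕ) : ℝ :=
  if ℓ = 0 then 0 else p * (1 - p) ^ (ℓ - 1)

/-- pmf of the dynamic discrete uniform distribution with parameter `γ` and sample size `n`: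
`p_ℓ^{(n)} = 1/⌊n^γ⌋` for `ℓ = 1, …, ⌊n^γ⌋`. -/
def unifPMF (γ : ℝ) (n : ℕ) (ℓ : ℕ) : ℝ :=
  if 1 ≤ ℓ ∧ ℓ ≤ ⌊(n : ℝ) ^ γ⌋₊ then (⌊(n : ℝ) ^ γ⌋₊ : ℝ)⁻¹ else 0

/-- pmf of the fixed discrete uniform distribution on `{1, …, K}`. -/
def fixedUnifPMF (K : ℕ) (ℓ : ℕ) : ℝ :=
  if 1 ≤ ℓ ∧ ℓ ≤ K then (K : ℝ)⁻¹ else 0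

/-- `y_{ℓ,n}`: the number of times letter `ℓ` appears in the sample `ω`. -/
def occ {n : ℕ} (ω : Fin n → ℕ) (ℓ : ℕ) : ℕ :=
  (Finset.univ.filter fun i => ω i = ℓ).card

/-- `N_{r,n}`: the number of letters appearing exactly `r` times in `ω` (valid for `r ≥ 1`). -/
def Ncount {n : ℕ} (ω : Fin n → ℕ) (r : ℕ) : ℕ :=
  ((Finset.univ.image ω).filter fun ℓ => occ ω ℓ = r).card

/-- `π_{r,n}`: the `r`-th occupancy probability. -/
def occProb {n : ℕ} (p : ℕ → ℝ) (ω : Fin n → ℕ) (r : ℕ) : ℝ :=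
  ∑' ℓ : ℕ, p ℓ * (if occ ω ℓ = r then 1 else 0)

/-- `T_{r,n}`: Turing's estimator. -/
def turing {n : ℕ} (ω : Fin n → ℕ) (r : ℕ) : ℝ :=
  ((r : ℝ) + 1) * (Ncount ω (r + 1) : ℝ) / (n : ℝ)

/-- `ŝ_{r,n} = sqrt((r+1)² N_{r+1,n} + (r+2)(r+1) N_{r+2,n})`. -/
def shat {n : ℕ} (ω : Fin n → ℕ) (r : ℕ) : ℝ :=
  Real.sqrt (((r : ℝ) + 1) ^ 2 * (Ncount ω (r + 1) : ℝ) +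
    ((r : ℝ) + 2) * ((r : ℝ) + 1) * (Ncount ω (r + 2) : ℝ))

/-- the joint pmf of an i.i.d. sample of size `n` from the pmf `p`. -/
def jointPMF {n : ℕ} (p : ℕ → ℝ) (ω : Fin n → ℕ) : ℝ := ∏ i, p (ω i)

/-- the normalized statistic `(n/ŝ_{r,n})(T_{r,n} - π_{r,n})`, interpreted as `0`
when `ŝ_{r,n} = 0` (which is automatic from Lean's convention `x / 0 = 0`). -/
def normStat {n : ℕ} (p : ℕ → ℝ) (ω : Fin n → ℕ) (r : ℕ) : ℝ :=
  (n : ℝ) / shat ω r * (turing ω r - occProb p ω r)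

open scoped Classical in
/-- the statistic `T_{r,n} (n/ŝ_{r,n}) (T_{r,n}/π_{r,n} - 1)`, interpreted as `0` on the
event where `ŝ_{r,n} = 0` or `π_{r,n} = 0`. -/
def ratioStat {n : ℕ} (p : ℕ → ℝ) (ω : Fin n → ℕ) (r : ℕ) : ℝ :=
  if shat ω r = 0 ∨ occProb p ω r = 0 then 0
  else turing ω r * ((n : ℝ) / shat ω r) * (turing ω r / occProb p ω r - 1)

/-- `s²_{r,n} = Σ_ℓ (r+1+n p_ℓ) e^{-n p_ℓ} (n p_ℓ)^{r+1} / r!`. -/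
def s2 (p : ℕ → ℝ) (r n : ℕ) : ℝ :=
  ∑' ℓ : ℕ, ((r : ℝ) + 1 + (n : ℝ) * p ℓ) * Real.exp (-((n : ℝ) * p ℓ)) *
    ((n : ℝ) * p ℓ) ^ (r + 1) / (r.factorial : ℝ)

/-- `h_{n,η}(x) = e^{-n f_n(x)} (n f_n(x))^η` where `f_n(x) = (e^{1/a_n} - 1) e^{-x/a_n}`. -/
def hfun (a : ℝ) (n : ℕ) (η : ℝ) (x : ℝ) : ℝ :=
  Real.exp (-((n : ℝ) * ((Real.exp (1 / a) - 1) * Real.exp (-x / a)))) *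
    ((n : ℝ) * ((Real.exp (1 / a) - 1) * Real.exp (-x / a))) ^ η


namespace S2Aux

open Set intervalIntegral

def phi (j : ℕ) (t : ℝ) : ℝ := Real.exp (-t) * t ^ (j + 1)
def Mb (j : ℕ) : ℝ := ((j : ℝ) + 1) ^ (j + 1) * Real.exp (-((j : ℝ) + 1))
def gg (a C x : ℝ) : ℝ := C * Real.exp (-x / a)
def Hf (a C : ℝ) (j : ℕ) (x : ℝ) : ℝ := phi j (gg a C x)
def psi (j : ℕ) (s : ℝ) : ℝ := Real.exp (-s) * s ^ j
def xst (a C : ℝ) (j : ℕ) : ℝ := max 0 (a * Real.log (C / ((j:ℝ)+1)))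

lemma phi_nonneg (j : ℕ) {t : ℝ} (ht : 0 ≤ t) : 0 ≤ phi j t :=
  mul_nonneg (Real.exp_pos _).le (pow_nonneg ht _)

lemma Mb_nonneg (j : ℕ) : 0 ≤ Mb j :=
  mul_nonneg (pow_nonneg (by positivity) _) (Real.exp_pos _).le

lemma phi_le_Mb (j : ℕ) {t : ℝ} (ht : 0 ≤ t) : phi j t ≤ Mb j := by
  have hk : (0:ℝ) < (j:ℝ) + 1 := by positivity
  -- t/(j+1) ≤ exp (t/(j+1) - 1)
  have h1 : t / ((j:ℝ)+1) ≤ Real.exp (t / ((j:ℝ)+1) - 1) := by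
    have := Real.add_one_le_exp (t / ((j:ℝ)+1) - 1)
    linarith
  have h2 : (t / ((j:ℝ)+1)) ^ (j+1) ≤ Real.exp (t / ((j:ℝ)+1) - 1) ^ (j+1) :=
    pow_le_pow_left₀ (by positivity) h1 _
  have h3 : Real.exp (t / ((j:ℝ)+1) - 1) ^ (j+1)
      = Real.exp (t - ((j:ℝ)+1)) := by
    rw [← Real.exp_nat_mul]
    congr 1
    have e : ((j:ℝ)+1) * (t / ((j:ℝ)+1) - 1) = t - ((j:ℝ)+1) := by
      field_simp
    rw [← e]
    push_cast
    ring
  have h4 : t ^ (j+1) ≤ ((j:ℝ)+1) ^ (j+1) * Real.exp (t - ((j:ℝ)+1)) := by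
    have := h2.trans_eq h3
    have h5 : (t / ((j:ℝ)+1)) ^ (j+1) = t ^ (j+1) / ((j:ℝ)+1) ^ (j+1) := div_pow _ _ _
    rw [h5, div_le_iff₀ (by positivity)] at this
    linarith [this]
  calc phi j t = t ^ (j+1) * Real.exp (-t) := by rw [phi]; ring
    _ ≤ (((j:ℝ)+1) ^ (j+1) * Real.exp (t - ((j:ℝ)+1))) * Real.exp (-t) :=
        mul_le_mul_of_nonneg_right h4 (Real.exp_pos _).le
    _ = Mb j := by
        rw [Mb, mul_assoc, ← Real.exp_add]
        ring_nf

lemma phi_hasDerivAt (j : ℕ) (t : ℝ) :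
    HasDerivAt (phi j) (Real.exp (-t) * t ^ j * (((j:ℝ) + 1) - t)) t := by
  have h1 : HasDerivAt (fun t : ℝ => Real.exp (-t)) (-Real.exp (-t)) t := by
    simpa using (hasDerivAt_neg t).exp
  have h2 : HasDerivAt (fun t : ℝ => t ^ (j+1)) (((j:ℝ)+1) * t ^ j) t := by
    simpa using hasDerivAt_pow (j+1) t
  have := h1.mul h2
  refine this.congr_deriv ?_
  ring

lemma phi_mono (j : ℕ) : MonotoneOn (phi j) (Icc (0:ℝ) ((j:ℝ)+1)) := by
  apply monotoneOn_of_deriv_nonneg (convex_Icc _ _)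
  · exact (((Real.continuous_exp.comp continuous_neg).mul (continuous_pow _))).continuousOn
  · intro t ht
    exact (phi_hasDerivAt j t).differentiableAt.differentiableWithinAt
  · intro t ht
    rw [interior_Icc] at ht
    rw [(phi_hasDerivAt j t).deriv]
    have h1 : (0:ℝ) ≤ t := ht.1.le
    have h2 : (0:ℝ) ≤ ((j:ℝ)+1) - t := by linarith [ht.2.le]
    have h3 : (0:ℝ) ≤ Real.exp (-t) * t ^ j := by positivity
    exact mul_nonneg h3 h2

lemma phi_anti (j : ℕ) : AntitoneOn (phi j) (Ici ((j:ℝ)+1)) := by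
  apply antitoneOn_of_deriv_nonpos (convex_Ici _)
  · exact (((Real.continuous_exp.comp continuous_neg).mul (continuous_pow _))).continuousOn
  · intro t ht
    exact (phi_hasDerivAt j t).differentiableAt.differentiableWithinAt
  · intro t ht
    rw [interior_Ici] at ht
    rw [(phi_hasDerivAt j t).deriv]
    have h0 : (0:ℝ) < t := lt_of_le_of_lt (by positivity) ht
    apply mul_nonpos_of_nonneg_of_nonpos
    · positivity
    · linarith [(Set.mem_Ioi.1 ht).le]

lemma phi_continuous (j : ℕ) : Continuous (phi j) :=
  (Real.continuous_exp.comp continuous_neg).mul (continuous_pow _)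


variable {H : ℝ → ℝ} {c M : ℝ}

lemma pair_bound (hc : 0 ≤ c) (hmono : MonotoneOn H (Icc (0:ℝ) c))
    (hanti : AntitoneOn H (Ici c)) (hM : ∀ x : ℝ, 0 ≤ x → H x ≤ M)
    (hcont : Continuous H) :
    H (⌊c⌋₊ : ℝ) + H ((⌊c⌋₊ : ℝ) + 1) ≤ M + ∫ x in (⌊c⌋₊:ℝ)..((⌊c⌋₊:ℝ)+1), H x := by
  set m : ℕ := ⌊c⌋₊ with hm
  have hm1 : (m:ℝ) ≤ c := Nat.floor_le hc
  have hm2 : c < (m:ℝ) + 1 := Nat.lt_floor_add_one c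
  have hmin : ∀ x ∈ Icc (m:ℝ) ((m:ℝ)+1), min (H m) (H ((m:ℝ)+1)) ≤ H x := by
    intro x hx
    rcases le_total x c with h | h
    · refine le_trans (min_le_left _ _) (hmono ⟨Nat.cast_nonneg m, hm1⟩
        ⟨le_trans (Nat.cast_nonneg m) hx.1, h⟩ hx.1)
    · exact le_trans (min_le_right _ _) (hanti h hm2.le hx.2)
  have hint : (min (H m) (H ((m:ℝ)+1))) ≤ ∫ x in (m:ℝ)..((m:ℝ)+1), H x := by
    have h1 : ∫ _x in (m:ℝ)..((m:ℝ)+1), min (H m) (H ((m:ℝ)+1))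
        = min (H m) (H ((m:ℝ)+1)) := by
      rw [intervalIntegral.integral_const]
      simp
    rw [← h1]
    apply intervalIntegral.integral_mono_on (by linarith)
      (intervalIntegrable_const) (hcont.intervalIntegrable _ _)
    exact hmin
  have hmax : max (H m) (H ((m:ℝ)+1)) ≤ M :=
    max_le (hM _ (Nat.cast_nonneg m)) (hM _ (by positivity))
  have := min_add_max (H (m:ℝ)) (H ((m:ℝ)+1))
  linarith

lemma si_upper (hc : 0 ≤ c) (hmono : MonotoneOn H (Icc (0:ℝ) c))
    (hanti : AntitoneOn H (Ici c)) (hM : ∀ x : ℝ, 0 ≤ x → H x ≤ M)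
    (h0 : ∀ x : ℝ, 0 ≤ x → 0 ≤ H x) (hcont : Continuous H)
    {N : ℕ} (hN : ⌊c⌋₊ + 1 ≤ N) :
    ∑ j ∈ Finset.Ico 1 (N+1), H j ≤ (∫ x in (0:ℝ)..N, H x) + M := by
  set m : ℕ := ⌊c⌋₊ with hm
  have hm1 : (m:ℝ) ≤ c := Nat.floor_le hc
  have hm2 : c < (m:ℝ) + 1 := Nat.lt_floor_add_one c
  have hii : ∀ a b : ℝ, IntervalIntegrable H volume a b :=
    fun a b => hcont.intervalIntegrable a b
  -- the three sum pieces
  have key : ∑ j ∈ Finset.Ico 1 (N+1), H j ≤ (∫ x in (1:ℝ)..N, H x) + M := by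
    rcases Nat.eq_zero_or_pos m with hm0 | hmpos
    · -- c < 1 : antitone on [1, ∞)
      have hsplit := Finset.sum_eq_sum_Ico_succ_bot
        (a := 1) (b := N+1) (by omega) (fun j : ℕ => H j)
      rw [hsplit]
      have h1 : H (1:ℕ) ≤ M := hM _ (by norm_num)
      have h2 : ∑ j ∈ Finset.Ico 2 (N+1), H j ≤ ∫ x in (1:ℝ)..N, H x := by
        have hanti' : AntitoneOn H (Icc ((1:ℕ):ℝ) ((N:ℕ):ℝ)) := by
          apply hanti.mono
          intro x hx
          exact le_trans (by rw [hm0] at hm2; simpa using hm2.le) hx.1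
        have := hanti'.sum_le_integral_Ico (by omega)
        calc ∑ j ∈ Finset.Ico 2 (N+1), H j
            = ∑ x ∈ Finset.Ico 1 N, H ((x+1 : ℕ) : ℝ) := by
              rw [Finset.sum_Ico_add' (fun j : ℕ => H j) 1 N 1]
          _ ≤ ∫ x in ((1:ℕ):ℝ)..((N:ℕ):ℝ), H x := this
          _ = ∫ x in (1:ℝ)..(N:ℝ), H x := by norm_num
      push_cast at h1 h2 ⊢
      linarith
    · -- m ≥ 1
      have hs1 : ∑ j ∈ Finset.Ico 1 (N+1), H j
          = ∑ j ∈ Finset.Ico 1 m, H j + (H (m:ℝ) + H ((m:ℝ)+1))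
            + ∑ j ∈ Finset.Ico (m+2) (N+1), H j := by
        rw [← Finset.sum_Ico_consecutive (fun j : ℕ => H j) (by omega : 1 ≤ m) (by omega : m ≤ N+1),
          ← Finset.sum_Ico_consecutive (fun j : ℕ => H j) (by omega : m ≤ m+2) (by omega : m+2 ≤ N+1)]
        have : ∑ j ∈ Finset.Ico m (m+2), H j = H (m:ℝ) + H ((m:ℝ)+1) := by
          rw [Finset.sum_Ico_succ_top (by omega : m ≤ m+1)]
          rw [Nat.Ico_succ_singleton, Finset.sum_singleton]
          push_cast
          ring
        rw [this]
        ring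
      have hP1 : ∑ j ∈ Finset.Ico 1 m, H j ≤ ∫ x in ((1:ℕ):ℝ)..((m:ℕ):ℝ), H x := by
        have hmono' : MonotoneOn H (Icc ((1:ℕ):ℝ) ((m:ℕ):ℝ)) := by
          apply hmono.mono
          intro x hx
          exact ⟨le_trans (by norm_num) hx.1, le_trans hx.2 hm1⟩
        exact hmono'.sum_le_integral_Ico (by omega)
      have hP2 := pair_bound hc hmono hanti hM hcont
      have hP3 : ∑ j ∈ Finset.Ico (m+2) (N+1), H j
          ≤ ∫ x in (((m+1):ℕ):ℝ)..((N:ℕ):ℝ), H x := by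
        have hanti' : AntitoneOn H (Icc (((m+1):ℕ):ℝ) ((N:ℕ):ℝ)) := by
          apply hanti.mono
          intro x hx
          refine le_trans hm2.le ?_
          have := hx.1
          push_cast at this ⊢
          linarith
        have := hanti'.sum_le_integral_Ico (by omega : m+1 ≤ N)
        calc ∑ j ∈ Finset.Ico (m+2) (N+1), H j
            = ∑ x ∈ Finset.Ico (m+1) N, H ((x+1 : ℕ) : ℝ) := by
              rw [Finset.sum_Ico_add' (fun j : ℕ => H j) (m+1) N 1]
          _ ≤ _ := this
      have hadd1 : (∫ x in ((1:ℕ):ℝ)..((m:ℕ):ℝ), H x) + (∫ x in (m:ℝ)..((m:ℝ)+1), H x)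
          + (∫ x in (((m+1):ℕ):ℝ)..((N:ℕ):ℝ), H x) = ∫ x in (1:ℝ)..(N:ℝ), H x := by
        push_cast
        rw [intervalIntegral.integral_add_adjacent_intervals (hii _ _) (hii _ _),
          intervalIntegral.integral_add_adjacent_intervals (hii _ _) (hii _ _)]
      rw [hs1]
      push_cast at hP1 hP2 hP3 hadd1 ⊢
      linarith
  have h01 : 0 ≤ ∫ x in (0:ℝ)..(1:ℝ), H x := by
    apply intervalIntegral.integral_nonneg (by norm_num)
    intro u hu; exact h0 u hu.1
  have hadd : (∫ x in (0:ℝ)..(1:ℝ), H x) + (∫ x in (1:ℝ)..(N:ℝ), H x)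
      = ∫ x in (0:ℝ)..(N:ℝ), H x :=
    intervalIntegral.integral_add_adjacent_intervals (hii _ _) (hii _ _)
  linarith

lemma si_lower (hc : 0 ≤ c) (hmono : MonotoneOn H (Icc (0:ℝ) c))
    (hanti : AntitoneOn H (Ici c)) (hM : ∀ x : ℝ, 0 ≤ x → H x ≤ M)
    (h0 : ∀ x : ℝ, 0 ≤ x → 0 ≤ H x) (hcont : Continuous H)
    {N : ℕ} (hN : ⌊c⌋₊ + 1 ≤ N) :
    (∫ x in (0:ℝ)..N, H x) ≤ (∑ j ∈ Finset.Ico 1 (N+1), H j) + M := by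
  set m : ℕ := ⌊c⌋₊ with hm
  have hm1 : (m:ℝ) ≤ c := Nat.floor_le hc
  have hm2 : c < (m:ℝ) + 1 := Nat.lt_floor_add_one c
  have hii : ∀ a b : ℝ, IntervalIntegrable H volume a b :=
    fun a b => hcont.intervalIntegrable a b
  have hP1 : (∫ x in ((0:ℕ):ℝ)..((m:ℕ):ℝ), H x) ≤ ∑ j ∈ Finset.Ico 1 (m+1), H j := by
    have hmono' : MonotoneOn H (Icc ((0:ℕ):ℝ) ((m:ℕ):ℝ)) := by
      apply hmono.mono
      intro x hx
      exact ⟨by simpa using hx.1, le_trans hx.2 hm1⟩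
    have := hmono'.integral_le_sum_Ico (by omega : 0 ≤ m)
    calc (∫ x in ((0:ℕ):ℝ)..((m:ℕ):ℝ), H x)
        ≤ ∑ x ∈ Finset.Ico 0 m, H ((x+1 : ℕ) : ℝ) := this
      _ = ∑ j ∈ Finset.Ico 1 (m+1), H j := by
          rw [Finset.sum_Ico_add' (fun j : ℕ => H j) 0 m 1]
  have hP2 : (∫ x in (m:ℝ)..((m:ℝ)+1), H x) ≤ M := by
    have h1 : ∫ _x in (m:ℝ)..((m:ℝ)+1), M = M := by
      rw [intervalIntegral.integral_const]; simp
    rw [← h1]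
    apply intervalIntegral.integral_mono_on (by linarith)
      (hii _ _) intervalIntegrable_const
    intro x hx
    exact hM x (le_trans (Nat.cast_nonneg m) hx.1)
  have hP3 : (∫ x in (((m+1):ℕ):ℝ)..((N:ℕ):ℝ), H x) ≤ ∑ j ∈ Finset.Ico (m+1) N, H j := by
    have hanti' : AntitoneOn H (Icc (((m+1):ℕ):ℝ) ((N:ℕ):ℝ)) := by
      apply hanti.mono
      intro x hx
      refine le_trans hm2.le ?_
      have := hx.1
      push_cast at this ⊢
      linarith
    exact hanti'.integral_le_sum_Ico (by omega : m+1 ≤ N)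
  have hsum : ∑ j ∈ Finset.Ico 1 (m+1), H j + ∑ j ∈ Finset.Ico (m+1) N, H j
      ≤ ∑ j ∈ Finset.Ico 1 (N+1), H j := by
    rw [Finset.sum_Ico_consecutive (fun j : ℕ => H j) (by omega : 1 ≤ m+1) (by omega : m+1 ≤ N)]
    apply Finset.sum_le_sum_of_subset_of_nonneg (Finset.Ico_subset_Ico le_rfl (by omega))
    intro j _ _
    exact h0 _ (Nat.cast_nonneg j)
  have hadd : (∫ x in ((0:ℕ):ℝ)..((m:ℕ):ℝ), H x) + (∫ x in (m:ℝ)..((m:ℝ)+1), H x)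
      + (∫ x in (((m+1):ℕ):ℝ)..((N:ℕ):ℝ), H x) = ∫ x in (0:ℝ)..(N:ℝ), H x := by
    push_cast
    rw [intervalIntegral.integral_add_adjacent_intervals (hii _ _) (hii _ _),
      intervalIntegral.integral_add_adjacent_intervals (hii _ _) (hii _ _)]
  push_cast at hP1 hP2 hP3 hadd hsum ⊢
  linarith


variable {a C : ℝ} {j : ℕ}

lemma gg_pos (hC : 0 < C) (x : ℝ) : 0 < gg a C x :=
  mul_pos hC (Real.exp_pos _)

lemma gg_anti (ha : 0 < a) (hC : 0 < C) {x y : ℝ} (hxy : x ≤ y) : gg a C y ≤ gg a C x := by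
  unfold gg
  apply mul_le_mul_of_nonneg_left _ hC.le
  apply Real.exp_le_exp.2
  exact (div_le_div_iff_of_pos_right ha).2 (neg_le_neg hxy)

lemma gg_xst_eq (ha : 0 < a) (hC : 0 < C) (hjC : (j:ℝ) + 1 ≤ C) :
    gg a C (xst a C j) = (j:ℝ) + 1 := by
  have hu : (1:ℝ) ≤ C / ((j:ℝ)+1) := (one_le_div (by positivity)).2 hjC
  have hlog : 0 ≤ Real.log (C / ((j:ℝ)+1)) := Real.log_nonneg hu
  have hxs : xst a C j = a * Real.log (C / ((j:ℝ)+1)) := max_eq_right (by positivity)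
  rw [hxs]
  unfold gg
  rw [show -(a * Real.log (C / ((j:ℝ)+1))) / a = -Real.log (C / ((j:ℝ)+1)) by
    rw [neg_div, mul_div_cancel_left₀ _ ha.ne']]
  rw [Real.exp_neg, Real.exp_log (by positivity), inv_div]
  have hC' : C ≠ 0 := hC.ne'
  field_simp

lemma xst_nonneg (a C : ℝ) (j : ℕ) : 0 ≤ xst a C j := le_max_left _ _

lemma gg_xst_le (ha : 0 < a) (hC : 0 < C) : gg a C (xst a C j) ≤ (j:ℝ) + 1 := by
  rcases le_or_gt ((j:ℝ)+1) C with h | h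
  · exact (gg_xst_eq ha hC h).le
  · have hlog : Real.log (C / ((j:ℝ)+1)) < 0 :=
      Real.log_neg (by positivity) ((div_lt_one (by positivity)).2 h)
    have hx : xst a C j = 0 := max_eq_left (by nlinarith)
    rw [hx]
    unfold gg
    simp only [neg_zero, zero_div, Real.exp_zero, mul_one]
    linarith

lemma gg_xst_ge (ha : 0 < a) (hC : 0 < C) {x : ℝ} (hx : x ≤ xst a C j)
    (hjC : (j:ℝ) + 1 ≤ C) : (j:ℝ) + 1 ≤ gg a C x := by
  calc (j:ℝ) + 1 = gg a C (xst a C j) := (gg_xst_eq ha hC hjC).symm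
    _ ≤ gg a C x := gg_anti ha hC hx

lemma Hf_mono (ha : 0 < a) (hC : 0 < C) :
    MonotoneOn (Hf a C j) (Icc (0:ℝ) (xst a C j)) := by
  rcases le_or_gt ((j:ℝ)+1) C with h | h
  · intro x hx y hy hxy
    exact phi_anti j (gg_xst_ge ha hC hy.2 h) (gg_xst_ge ha hC hx.2 h) (gg_anti ha hC hxy)
  · have hx0 : xst a C j = 0 := by
      have hlog : Real.log (C / ((j:ℝ)+1)) < 0 :=
        Real.log_neg (by positivity) ((div_lt_one (by positivity)).2 h)
      exact max_eq_left (by nlinarith)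
    rw [hx0]
    intro x hx y hy hxy
    have : x = y := le_antisymm hxy (le_trans hy.2 hx.1)
    rw [this]

lemma Hf_anti (ha : 0 < a) (hC : 0 < C) :
    AntitoneOn (Hf a C j) (Ici (xst a C j)) := by
  intro x hx y hy hxy
  have h1 : gg a C y ≤ gg a C x := gg_anti ha hC hxy
  have h2 : gg a C x ≤ (j:ℝ) + 1 :=
    le_trans (gg_anti ha hC hx) (gg_xst_le ha hC)
  have h3 : gg a C y ≤ (j:ℝ) + 1 := le_trans h1 h2
  exact phi_mono j ⟨(gg_pos hC y).le, h3⟩ ⟨(gg_pos hC x).le, h2⟩ h1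

lemma Hf_continuous (ha : a ≠ 0) : Continuous (Hf a C j) := by
  apply (phi_continuous j).comp
  exact continuous_const.mul (Real.continuous_exp.comp (continuous_id.neg.div_const a))

lemma Hf_nonneg (hC : 0 < C) (x : ℝ) : 0 ≤ Hf a C j x :=
  phi_nonneg j (gg_pos hC x).le

lemma Hf_le_Mb (hC : 0 < C) (x : ℝ) : Hf a C j x ≤ Mb j :=
  phi_le_Mb j (gg_pos hC x).le

lemma psi_continuous (j : ℕ) : Continuous (psi j) :=
  (Real.continuous_exp.comp continuous_neg).mul (continuous_pow _)

lemma psi_nonneg (j : ℕ) {s : ℝ} (hs : 0 ≤ s) : 0 ≤ psi j s :=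
  mul_nonneg (Real.exp_pos _).le (pow_nonneg hs _)

/-- the key integral identity -/
lemma integral_Hf (ha : 0 < a) (hC : 0 < C) (N : ℝ) :
    ∫ x in (0:ℝ)..N, Hf a C j x = a * ∫ s in (gg a C N)..C, psi j s := by
  have hF : ∀ x : ℝ, HasDerivAt (fun x => a * ∫ s in (gg a C x)..C, psi j s)
      (Hf a C j x) x := by
    intro x
    have hG : HasDerivAt (fun u => ∫ s in u..C, psi j s) (-psi j (gg a C x)) (gg a C x) :=
      intervalIntegral.integral_hasDerivAt_left
        ((psi_continuous j).intervalIntegrable _ _)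
        ((psi_continuous j).stronglyMeasurableAtFilter _ _)
        (psi_continuous j).continuousAt
    have hg : HasDerivAt (gg a C) (-(gg a C x) / a) x := by
      have h1 : HasDerivAt (fun x : ℝ => -x / a) (-(1/a)) x := by
        exact ((hasDerivAt_neg x).div_const a).congr_deriv (by ring)
      have h2 : HasDerivAt (fun x : ℝ => Real.exp (-x / a))
          (Real.exp (-x/a) * (-(1/a))) x := (Real.hasDerivAt_exp _).comp x h1
      have h3 := h2.const_mul C
      refine h3.congr_deriv ?_
      unfold gg
      field_simp
    have := (hG.comp x hg).const_mul a
    refine this.congr_deriv ?_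
    unfold Hf phi psi
    have hane : a ≠ 0 := ha.ne'
    field_simp
    ring
  rw [intervalIntegral.integral_eq_sub_of_hasDerivAt (fun x _ => hF x)
    ((Hf_continuous ha.ne').intervalIntegrable _ _)]
  have hg0 : gg a C 0 = C := by unfold gg; simp
  rw [hg0, intervalIntegral.integral_same]
  ring

lemma psi_integrableOn (j : ℕ) : IntegrableOn (psi j) (Ioi (0:ℝ)) := by
  have h := Real.GammaIntegral_convergent (s := (j:ℝ)+1) (by positivity)
  apply h.congr_fun _ measurableSet_Ioi
  intro x hx
  show Real.exp (-x) * x ^ (((j:ℝ)+1)-1) = psi j x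
  unfold psi
  congr 1
  rw [show ((j:ℝ)+1)-1 = (j:ℝ) by ring, Real.rpow_natCast]

lemma psi_total (j : ℕ) : ∫ s in Ioi (0:ℝ), psi j s = (j.factorial : ℝ) := by
  have h1 := Real.Gamma_eq_integral (s := (j:ℝ)+1) (by positivity)
  have h2 : Real.Gamma ((j:ℝ)+1) = (j.factorial : ℝ) := by
    exact_mod_cast Real.Gamma_nat_eq_factorial j
  rw [← h2, h1]
  apply setIntegral_congr_fun measurableSet_Ioi
  intro x hx
  show psi j x = Real.exp (-x) * x ^ (((j:ℝ)+1)-1)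
  unfold psi
  rw [show ((j:ℝ)+1)-1 = (j:ℝ) by ring, Real.rpow_natCast]

lemma gamma_le (j : ℕ) {u v : ℝ} (hu : 0 ≤ u) (huv : u ≤ v) :
    ∫ s in u..v, psi j s ≤ (j.factorial : ℝ) := by
  rw [intervalIntegral.integral_of_le huv, ← psi_total j]
  apply setIntegral_mono_set (psi_integrableOn j)
  · filter_upwards [ae_restrict_mem measurableSet_Ioi] with s hs
    exact psi_nonneg j (le_of_lt hs)
  · filter_upwards with s hs
    exact lt_of_le_of_lt hu hs.1


lemma gg_le (ha : 0 < a) (hC : 0 < C) {x : ℝ} (hx : 0 ≤ x) : gg a C x ≤ C := by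
  unfold gg
  nth_rewrite 2 [show C = C * 1 by ring]
  apply mul_le_mul_of_nonneg_left _ hC.le
  rw [Real.exp_le_one_iff, neg_div]
  have h : 0 ≤ x / a := div_nonneg hx ha.le
  linarith

lemma partial_sum_eq (N : ℕ) :
    ∑ ℓ ∈ Finset.range N, Hf a C j ((ℓ:ℝ)+1)
      = ∑ i ∈ Finset.Ico 1 (N+1), Hf a C j (i:ℝ) := by
  rw [← Finset.sum_Ico_add' (fun i : ℕ => Hf a C j (i:ℝ)) 0 N 1, ← Nat.Ico_zero_eq_range]
  apply Finset.sum_congr rfl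
  intro x _
  push_cast
  ring_nf

lemma sum_range_le (ha : 0 < a) (hC : 0 < C) {N : ℕ} (hN : ⌊xst a C j⌋₊ + 1 ≤ N) :
    ∑ ℓ ∈ Finset.range N, Hf a C j ((ℓ:ℝ)+1) ≤ a * (j.factorial : ℝ) + Mb j := by
  rw [partial_sum_eq]
  have h1 := si_upper (xst_nonneg a C j) (Hf_mono ha hC) (Hf_anti ha hC)
    (fun x _ => Hf_le_Mb hC x) (fun x _ => Hf_nonneg hC x) (Hf_continuous ha.ne') hN
  have h2 := integral_Hf (j := j) ha hC (N:ℝ)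
  have h3 : (∫ s in (gg a C N)..C, psi j s) ≤ (j.factorial : ℝ) :=
    gamma_le j (gg_pos hC _).le (gg_le ha hC (Nat.cast_nonneg N))
  calc ∑ i ∈ Finset.Ico 1 (N+1), Hf a C j (i:ℝ)
      ≤ (∫ x in (0:ℝ)..N, Hf a C j x) + Mb j := h1
    _ = a * (∫ s in (gg a C N)..C, psi j s) + Mb j := by rw [h2]
    _ ≤ a * (j.factorial : ℝ) + Mb j := by nlinarith [h3, ha.le]

lemma sum_range_le_all (ha : 0 < a) (hC : 0 < C) (N : ℕ) :
    ∑ ℓ ∈ Finset.range N, Hf a C j ((ℓ:ℝ)+1) ≤ a * (j.factorial : ℝ) + Mb j := by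
  set m := ⌊xst a C j⌋₊
  calc ∑ ℓ ∈ Finset.range N, Hf a C j ((ℓ:ℝ)+1)
      ≤ ∑ ℓ ∈ Finset.range (N + (m+1)), Hf a C j ((ℓ:ℝ)+1) := by
        apply Finset.sum_le_sum_of_subset_of_nonneg (Finset.range_subset_range.2 (by omega))
        intro i _ _
        exact Hf_nonneg hC _
    _ ≤ _ := sum_range_le ha hC (by omega)

lemma summable_Hf (ha : 0 < a) (hC : 0 < C) :
    Summable (fun ℓ : ℕ => Hf a C j ((ℓ:ℝ)+1)) :=
  summable_of_sum_range_le (fun _ => Hf_nonneg hC _) (sum_range_le_all ha hC)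

lemma tsum_Hf_le (ha : 0 < a) (hC : 0 < C) :
    ∑' ℓ : ℕ, Hf a C j ((ℓ:ℝ)+1) ≤ a * (j.factorial : ℝ) + Mb j :=
  Real.tsum_le_of_sum_range_le (fun _ => Hf_nonneg hC _) (sum_range_le_all ha hC)

lemma gg_tendsto_zero (ha : 0 < a) : Tendsto (fun N : ℕ => gg a C (N:ℝ)) atTop (𝓝 0) := by
  have h0 : Tendsto (fun N : ℕ => (N:ℝ)/a) atTop atTop :=
    (tendsto_natCast_atTop_atTop).atTop_div_const ha
  have h1 : Tendsto (fun N : ℕ => -((N:ℝ)/a)) atTop atBot :=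
    tendsto_neg_atTop_atBot.comp h0
  have h2 : Tendsto (fun N : ℕ => Real.exp (-((N:ℝ)/a))) atTop (𝓝 0) :=
    Real.tendsto_exp_atBot.comp h1
  have h3 := h2.const_mul C
  simp only [mul_zero] at h3
  unfold gg
  simp only [neg_div]
  exact h3

lemma tsum_Hf_ge (ha : 0 < a) (hC : 0 < C) :
    a * (∫ s in (0:ℝ)..C, psi j s) - Mb j ≤ ∑' ℓ : ℕ, Hf a C j ((ℓ:ℝ)+1) := by
  set T := ∑' ℓ : ℕ, Hf a C j ((ℓ:ℝ)+1) with hT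
  have key : ∀ N : ℕ, ⌊xst a C j⌋₊ + 1 ≤ N →
      a * ((∫ s in (0:ℝ)..C, psi j s) - ∫ s in (0:ℝ)..(gg a C (N:ℝ)), psi j s)
        ≤ T + Mb j := by
    intro N hN
    have h1 := si_lower (xst_nonneg a C j) (Hf_mono ha hC) (Hf_anti ha hC)
      (fun x _ => Hf_le_Mb hC x) (fun x _ => Hf_nonneg hC x) (Hf_continuous ha.ne') hN
    have h2 := integral_Hf (j := j) ha hC (N:ℝ)
    have h3 : (∫ s in (gg a C (N:ℝ))..C, psi j s)
        = (∫ s in (0:ℝ)..C, psi j s) - ∫ s in (0:ℝ)..(gg a C (N:ℝ)), psi j s := by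
      rw [eq_sub_iff_add_eq]
      rw [add_comm]
      exact intervalIntegral.integral_add_adjacent_intervals
        ((psi_continuous j).intervalIntegrable _ _) ((psi_continuous j).intervalIntegrable _ _)
    have h4 : ∑ i ∈ Finset.Ico 1 (N+1), Hf a C j (i:ℝ) ≤ T := by
      rw [← partial_sum_eq]
      exact Summable.sum_le_tsum (Finset.range N) (fun i _ => Hf_nonneg hC _) (summable_Hf ha hC)
    calc a * ((∫ s in (0:ℝ)..C, psi j s) - ∫ s in (0:ℝ)..(gg a C (N:ℝ)), psi j s)
        = a * ∫ s in (gg a C (N:ℝ))..C, psi j s := by rw [h3]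
      _ = ∫ x in (0:ℝ)..N, Hf a C j x := h2.symm
      _ ≤ (∑ i ∈ Finset.Ico 1 (N+1), Hf a C j (i:ℝ)) + Mb j := h1
      _ ≤ T + Mb j := by linarith
  -- limit as N → ∞
  have htint : Tendsto (fun N : ℕ => ∫ s in (0:ℝ)..(gg a C (N:ℝ)), psi j s) atTop (𝓝 0) := by
    have hub : ∀ N : ℕ, |∫ s in (0:ℝ)..(gg a C (N:ℝ)), psi j s| ≤ gg a C (N:ℝ) * C^j := by
      intro N
      rw [abs_of_nonneg (intervalIntegral.integral_nonneg (gg_pos hC _).le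
        (fun s hs => psi_nonneg j hs.1))]
      have hle : ∀ s ∈ Icc (0:ℝ) (gg a C (N:ℝ)), psi j s ≤ C^j := by
        intro s hs
        unfold psi
        calc Real.exp (-s) * s ^ j ≤ 1 * s ^ j := by
              apply mul_le_mul_of_nonneg_right _ (pow_nonneg hs.1 _)
              rw [Real.exp_le_one_iff]
              linarith [hs.1]
          _ = s ^ j := one_mul _
          _ ≤ C ^ j := pow_le_pow_left₀ hs.1 (le_trans hs.2 (gg_le ha hC (Nat.cast_nonneg N))) _
      calc (∫ s in (0:ℝ)..(gg a C (N:ℝ)), psi j s)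
          ≤ ∫ _s in (0:ℝ)..(gg a C (N:ℝ)), C^j := by
            apply intervalIntegral.integral_mono_on (gg_pos hC _).le
              ((psi_continuous j).intervalIntegrable _ _) intervalIntegrable_const hle
        _ = gg a C (N:ℝ) * C^j := by
            rw [intervalIntegral.integral_const]; simp
    apply squeeze_zero_norm hub
    have := (gg_tendsto_zero (C := C) ha).mul_const (C^j)
    simpa using this
  have hfull : Tendsto (fun N : ℕ =>
      a * ((∫ s in (0:ℝ)..C, psi j s) - ∫ s in (0:ℝ)..(gg a C (N:ℝ)), psi j s)) atTop
      (𝓝 (a * ((∫ s in (0:ℝ)..C, psi j s) - 0))) :=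
    ((tendsto_const_nhds.sub htint)).const_mul a
  have hfin := le_of_tendsto hfull (by
    filter_upwards [eventually_ge_atTop (⌊xst a C j⌋₊ + 1)] with N hN
    exact key N hN)
  rw [sub_zero] at hfin
  linarith


lemma Hf_nonneg' (hC : 0 < C) (x : ℝ) : 0 ≤ Hf a C j x := by
  unfold Hf phi gg
  positivity

lemma geomPMF_nonneg {α : ℝ} (hα : 0 < α) (ℓ : ℕ) : 0 ≤ geomPMF α ℓ := by
  unfold geomPMF
  split
  · exact le_rfl
  · have hx : 0 ≤ 1/α := by positivity
    have h1 := Real.add_one_le_exp (1/α)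
    have h2 := (Real.exp_pos (-(ℓ:ℝ)/α)).le
    nlinarith

lemma Cpos {α : ℝ} (hα : 0 < α) {n : ℕ} (hn : 1 ≤ n) :
    0 < (n:ℝ) * (Real.exp (1/α) - 1) := by
  apply mul_pos (by exact_mod_cast Nat.pos_of_ne_zero (by omega))
  have := Real.add_one_le_exp (1/α)
  have h1 : 0 < 1/α := by positivity
  linarith

lemma s2_term_nonneg {α : ℝ} (hα : 0 < α) (r n ℓ : ℕ) :
    0 ≤ ((r : ℝ) + 1 + (n : ℝ) * geomPMF α ℓ) * Real.exp (-((n : ℝ) * geomPMF α ℓ)) *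
      ((n : ℝ) * geomPMF α ℓ) ^ (r + 1) / (r.factorial : ℝ) := by
  have hq : 0 ≤ (n:ℝ) * geomPMF α ℓ :=
    mul_nonneg (Nat.cast_nonneg n) (geomPMF_nonneg hα ℓ)
  have h1 : (0:ℝ) < r.factorial := by exact_mod_cast r.factorial_pos
  have h2 : (0:ℝ) ≤ (r:ℝ) + 1 + (n:ℝ) * geomPMF α ℓ := by positivity
  positivity

lemma s2_nonneg {α : ℝ} (hα : 0 < α) (r n : ℕ) : 0 ≤ s2 (geomPMF α) r n :=
  tsum_nonneg (fun ℓ => s2_term_nonneg hα r n ℓ)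

lemma s2_eq {α : ℝ} (hα : 0 < α) (r : ℕ) {n : ℕ} (hn : 1 ≤ n) :
    s2 (geomPMF α) r n
      = (((r:ℝ)+1)/(r.factorial:ℝ)) *
          (∑' ℓ:ℕ, Hf α ((n:ℝ)*(Real.exp (1/α)-1)) r ((ℓ:ℝ)+1))
      + (1/(r.factorial:ℝ)) *
          (∑' ℓ:ℕ, Hf α ((n:ℝ)*(Real.exp (1/α)-1)) (r+1) ((ℓ:ℝ)+1)) := by
  set C : ℝ := (n:ℝ)*(Real.exp (1/α)-1) with hC
  have hCp : 0 < C := Cpos hα hn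
  set q : ℕ → ℝ := fun ℓ => (n:ℝ) * geomPMF α ℓ with hq
  have hq0 : q 0 = 0 := by simp [hq, geomPMF]
  have hqs : ∀ j' : ℕ, ∀ ℓ : ℕ, phi j' (q (ℓ+1)) = Hf α C j' ((ℓ:ℝ)+1) := by
    intro j' ℓ
    unfold Hf gg
    congr 1
    simp only [hq, geomPMF, Nat.succ_ne_zero, if_false, hC]
    push_cast
    ring
  have hterm : ∀ ℓ : ℕ,
      ((r : ℝ) + 1 + q ℓ) * Real.exp (-(q ℓ)) * (q ℓ) ^ (r + 1) / (r.factorial : ℝ)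
      = (((r:ℝ)+1)/(r.factorial:ℝ)) * phi r (q ℓ)
        + (1/(r.factorial:ℝ)) * phi (r+1) (q ℓ) := by
    intro ℓ
    have h1 : ((r.factorial:ℝ)) ≠ 0 := by
      have : (0:ℝ) < r.factorial := by exact_mod_cast r.factorial_pos
      linarith
    unfold phi
    field_simp
    ring
  have hS1 : Summable (fun ℓ : ℕ => phi r (q ℓ)) := by
    rw [← summable_nat_add_iff 1]
    have he : (fun ℓ : ℕ => phi r (q (ℓ+1))) = fun ℓ : ℕ => Hf α C r ((ℓ:ℝ)+1) :=
      funext (hqs r)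
    rw [he]
    exact summable_Hf hα hCp
  have hS2 : Summable (fun ℓ : ℕ => phi (r+1) (q ℓ)) := by
    rw [← summable_nat_add_iff 1]
    have he : (fun ℓ : ℕ => phi (r+1) (q (ℓ+1))) = fun ℓ : ℕ => Hf α C (r+1) ((ℓ:ℝ)+1) :=
      funext (hqs (r+1))
    rw [he]
    exact summable_Hf hα hCp
  have hT1 : ∑' ℓ : ℕ, phi r (q ℓ) = ∑' ℓ:ℕ, Hf α C r ((ℓ:ℝ)+1) := by
    rw [Summable.tsum_eq_zero_add hS1]
    simp only [hq0]
    rw [show phi r 0 = 0 by simp [phi]]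
    rw [zero_add]
    congr 1
    exact funext (hqs r)
  have hT2 : ∑' ℓ : ℕ, phi (r+1) (q ℓ) = ∑' ℓ:ℕ, Hf α C (r+1) ((ℓ:ℝ)+1) := by
    rw [Summable.tsum_eq_zero_add hS2]
    simp only [hq0]
    rw [show phi (r+1) 0 = 0 by simp [phi]]
    rw [zero_add]
    congr 1
    exact funext (hqs (r+1))
  calc s2 (geomPMF α) r n
      = ∑' ℓ : ℕ, (((r:ℝ)+1)/(r.factorial:ℝ) * phi r (q ℓ)
          + (1/(r.factorial:ℝ)) * phi (r+1) (q ℓ)) := by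
        unfold s2
        exact tsum_congr hterm
    _ = (((r:ℝ)+1)/(r.factorial:ℝ)) * ∑' ℓ : ℕ, phi r (q ℓ)
          + (1/(r.factorial:ℝ)) * ∑' ℓ : ℕ, phi (r+1) (q ℓ) := by
        rw [Summable.tsum_add (hS1.mul_left _) (hS2.mul_left _), tsum_mul_left, tsum_mul_left]
    _ = _ := by rw [hT1, hT2]

lemma fact_bound (r : ℕ) : (r:ℝ) + 1 ≤ 2 * (r.factorial : ℝ) := by
  have : r + 1 ≤ 2 * r.factorial := by
    induction r with
    | zero => simp
    | succ n ih =>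
      rw [Nat.factorial_succ]
      have h1 : 1 ≤ n.factorial := Nat.one_le_iff_ne_zero.2 n.factorial_ne_zero
      nlinarith
  exact_mod_cast this


end S2Aux

open S2Aux

/-- if `a_n > 0` and `a_n → a ∈ [0,∞)`, then for the dynamic geometric
distribution with parameter `a_n`, `liminf`/`limsup` of `s²_{r,n}` satisfy the stated bounds. -/

theorem s2_bounds_dynamic_geometric (a : ℕ → ℝ) (ha : ∀ n, 0 < a n)
    (A : ℝ) (hA : 0 ≤ A) (haA : Tendsto a atTop (𝓝 A)) (r : ℕ) :
    2 * max 0 (A * ((r : ℝ) + 1)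
        - ((r : ℝ) + 1) ^ (r + 1) * Real.exp (-((r : ℝ) + 1))
        - ((r : ℝ) + 2) ^ (r + 2) * Real.exp (-((r : ℝ) + 2)))
      ≤ liminf (fun n : ℕ => s2 (geomPMF (a n)) r n) atTop ∧
    liminf (fun n : ℕ => s2 (geomPMF (a n)) r n) atTop
      ≤ limsup (fun n : ℕ => s2 (geomPMF (a n)) r n) atTop ∧
    limsup (fun n : ℕ => s2 (geomPMF (a n)) r n) atTop
      ≤ 2 * A * ((r : ℝ) + 1)
        + 2 * ((r : ℝ) + 1) ^ (r + 1) * Real.exp (-((r : ℝ) + 1))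
        + 2 * ((r : ℝ) + 2) ^ (r + 2) * Real.exp (-((r : ℝ) + 2)) := by
  have hfact : (0:ℝ) < r.factorial := by exact_mod_cast r.factorial_pos
  set c1 : ℝ := ((r:ℝ)+1)/(r.factorial : ℝ) with hc1
  set c2 : ℝ := 1/(r.factorial : ℝ) with hc2
  set K : ℝ := c1 * Mb r + c2 * Mb (r+1) with hK
  set C : ℕ → ℝ := fun n => (n:ℝ) * (Real.exp (1/a n) - 1) with hCdef
  set f : ℕ → ℝ := fun n : ℕ => s2 (geomPMF (a n)) r n with hfdef
  have hc1p : 0 ≤ c1 := by positivity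
  have hc2p : 0 ≤ c2 := by positivity
  have hc1le : c1 ≤ 2 := by
    rw [hc1, div_le_iff₀ hfact]
    linarith [fact_bound r]
  have hc2le : c2 ≤ 2 := by
    rw [hc2, div_le_iff₀ hfact]
    have : (1:ℝ) ≤ r.factorial := by exact_mod_cast r.factorial_pos
    linarith
  have hKle : K ≤ 2 * Mb r + 2 * Mb (r+1) := by
    rw [hK]
    have := Mb_nonneg r
    have := Mb_nonneg (r+1)
    nlinarith
  have hMb1 : Mb r = ((r : ℝ) + 1) ^ (r + 1) * Real.exp (-((r : ℝ) + 1)) := rfl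
  have hMb2 : Mb (r+1) = ((r : ℝ) + 2) ^ (r + 2) * Real.exp (-((r : ℝ) + 2)) := by
    unfold Mb
    push_cast
    ring_nf
  -- equalities for the linear combination
  have e1 : c1 * (r.factorial:ℝ) = (r:ℝ)+1 := by
    rw [hc1]; field_simp
  have e2 : c2 * ((r+1).factorial:ℝ) = (r:ℝ)+1 := by
    rw [hc2, Nat.factorial_succ]
    push_cast
    field_simp
  have hnonneg : ∀ n, 0 ≤ f n := fun n => s2_nonneg (ha n) r n
  -- upper bound
  have hub : ∀ n : ℕ, 1 ≤ n → f n ≤ 2 * a n * ((r:ℝ)+1) + K := by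
    intro n hn
    have hCp : 0 < C n := Cpos (ha n) hn
    have h1 := tsum_Hf_le (j := r) (ha n) hCp
    have h2 := tsum_Hf_le (j := r+1) (ha n) hCp
    rw [hfdef]
    simp only []
    rw [s2_eq (ha n) r hn]
    have hle : c1 * (∑' ℓ:ℕ, Hf (a n) (C n) r ((ℓ:ℝ)+1))
          + c2 * (∑' ℓ:ℕ, Hf (a n) (C n) (r+1) ((ℓ:ℝ)+1))
        ≤ c1 * (a n * (r.factorial:ℝ) + Mb r)
          + c2 * (a n * ((r+1).factorial:ℝ) + Mb (r+1)) := by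
      apply add_le_add (mul_le_mul_of_nonneg_left h1 hc1p) (mul_le_mul_of_nonneg_left h2 hc2p)
    have heq : c1 * (a n * (r.factorial:ℝ) + Mb r)
          + c2 * (a n * ((r+1).factorial:ℝ) + Mb (r+1))
        = a n * (c1 * (r.factorial:ℝ)) + a n * (c2 * ((r+1).factorial:ℝ)) + K := by
      rw [hK]; ring
    rw [heq, e1, e2] at hle
    calc c1 * (∑' ℓ:ℕ, Hf (a n) (C n) r ((ℓ:ℝ)+1))
          + c2 * (∑' ℓ:ℕ, Hf (a n) (C n) (r+1) ((ℓ:ℝ)+1))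
        ≤ a n * ((r:ℝ)+1) + a n * ((r:ℝ)+1) + K := hle
      _ = 2 * a n * ((r:ℝ)+1) + K := by ring
  -- lower bound
  have hlb : ∀ n : ℕ, 1 ≤ n →
      c1 * (a n * ∫ s in (0:ℝ)..(C n), psi r s)
        + c2 * (a n * ∫ s in (0:ℝ)..(C n), psi (r+1) s) - K ≤ f n := by
    intro n hn
    have hCp : 0 < C n := Cpos (ha n) hn
    have h1 := tsum_Hf_ge (j := r) (ha n) hCp
    have h2 := tsum_Hf_ge (j := r+1) (ha n) hCp
    rw [hfdef]
    simp only []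
    rw [s2_eq (ha n) r hn]
    have hge : c1 * (a n * (∫ s in (0:ℝ)..(C n), psi r s) - Mb r)
          + c2 * (a n * (∫ s in (0:ℝ)..(C n), psi (r+1) s) - Mb (r+1))
        ≤ c1 * (∑' ℓ:ℕ, Hf (a n) (C n) r ((ℓ:ℝ)+1))
          + c2 * (∑' ℓ:ℕ, Hf (a n) (C n) (r+1) ((ℓ:ℝ)+1)) :=
      add_le_add (mul_le_mul_of_nonneg_left h1 hc1p) (mul_le_mul_of_nonneg_left h2 hc2p)
    have heq : c1 * (a n * (∫ s in (0:ℝ)..(C n), psi r s) - Mb r)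
          + c2 * (a n * (∫ s in (0:ℝ)..(C n), psi (r+1) s) - Mb (r+1))
        = c1 * (a n * ∫ s in (0:ℝ)..(C n), psi r s)
          + c2 * (a n * ∫ s in (0:ℝ)..(C n), psi (r+1) s) - K := by
      rw [hK]; ring
    rw [heq] at hge
    exact hge
  -- C tends to infinity
  have hevA : ∀ᶠ n in atTop, a n ≤ A + 1 :=
    haA.eventually (eventually_le_nhds (lt_add_one A))
  have hCtend : Tendsto C atTop atTop := by
    have hev : ∀ᶠ n : ℕ in atTop, (n:ℝ)/(A+1) ≤ C n := by
      filter_upwards [hevA] with n h1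
      have hpos := ha n
      have hx : 1/(A+1) ≤ 1/(a n) := by
        apply one_div_le_one_div_of_le hpos h1
      have hexp : 1/(a n) ≤ Real.exp (1/(a n)) - 1 := by
        linarith [Real.add_one_le_exp (1/(a n))]
      calc (n:ℝ)/(A+1) = (n:ℝ) * (1/(A+1)) := by ring
        _ ≤ (n:ℝ) * (Real.exp (1/a n) - 1) := by
            apply mul_le_mul_of_nonneg_left _ (Nat.cast_nonneg n)
            linarith
    apply tendsto_atTop_mono' atTop hev
    exact (tendsto_natCast_atTop_atTop).atTop_div_const (by linarith)
  have hG1 : Tendsto (fun n => ∫ s in (0:ℝ)..(C n), psi r s) atTop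
      (𝓝 (r.factorial : ℝ)) := by
    have := intervalIntegral_tendsto_integral_Ioi 0 (psi_integrableOn r) hCtend
    rwa [psi_total r] at this
  have hG2 : Tendsto (fun n => ∫ s in (0:ℝ)..(C n), psi (r+1) s) atTop
      (𝓝 ((r+1).factorial : ℝ)) := by
    have := intervalIntegral_tendsto_integral_Ioi 0 (psi_integrableOn (r+1)) hCtend
    rwa [psi_total (r+1)] at this
  -- tendsto of bounds
  set g : ℕ → ℝ := fun n => 2 * a n * ((r:ℝ)+1) + K with hgdef
  have htg : Tendsto g atTop (𝓝 (2 * A * ((r:ℝ)+1) + K)) := by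
    apply Tendsto.add_const
    exact (haA.const_mul 2).mul_const _
  set lo : ℕ → ℝ := fun n => c1 * (a n * ∫ s in (0:ℝ)..(C n), psi r s)
      + c2 * (a n * ∫ s in (0:ℝ)..(C n), psi (r+1) s) - K with hlodef
  have htlo : Tendsto lo atTop
      (𝓝 (c1 * (A * (r.factorial:ℝ)) + c2 * (A * ((r+1).factorial:ℝ)) - K)) := by
    apply Tendsto.sub_const
    exact ((haA.mul hG1).const_mul c1).add ((haA.mul hG2).const_mul c2)
  have hLval : c1 * (A * (r.factorial:ℝ)) + c2 * (A * ((r+1).factorial:ℝ)) - K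
      = 2 * A * ((r:ℝ)+1) - K := by
    have h1 : c1 * (A * (r.factorial:ℝ)) = A * (c1 * (r.factorial:ℝ)) := by ring
    have h2 : c2 * (A * ((r+1).factorial:ℝ)) = A * (c2 * ((r+1).factorial:ℝ)) := by ring
    rw [h1, h2, e1, e2]
    ring
  rw [hLval] at htlo
  -- boundedness facts
  have hfg : f ≤ᶠ[atTop] g := by
    filter_upwards [eventually_ge_atTop 1] with n hn
    exact hub n hn
  have hbdd_le : IsBoundedUnder (· ≤ ·) atTop f := by
    apply isBoundedUnder_of_eventually_le (a := 2 * (A+1) * ((r:ℝ)+1) + K)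
    filter_upwards [hevA, eventually_ge_atTop 1] with n h1 hn
    have := hub n hn
    have h3 : 2 * a n * ((r:ℝ)+1) ≤ 2 * (A+1) * ((r:ℝ)+1) := by
      have : (0:ℝ) ≤ (r:ℝ)+1 := by positivity
      nlinarith
    linarith
  have hbdd_ge : IsBoundedUnder (· ≥ ·) atTop f :=
    isBoundedUnder_of_eventually_ge (Eventually.of_forall hnonneg)
  refine ⟨?_, liminf_le_limsup hbdd_le hbdd_ge, ?_⟩
  · -- lower bound on liminf
    have h3 : liminf lo atTop ≤ liminf f atTop := by
      apply liminf_le_liminf _ htlo.isBoundedUnder_ge hbdd_le.isCoboundedUnder_ge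
      filter_upwards [eventually_ge_atTop 1] with n hn
      exact hlb n hn
    rw [htlo.liminf_eq] at h3
    have h0f : (0:ℝ) ≤ liminf f atTop :=
      le_liminf_of_le hbdd_le.isCoboundedUnder_ge (Eventually.of_forall hnonneg)
    rw [← hMb1, ← hMb2]
    rw [mul_max_of_nonneg _ _ (by norm_num : (0:ℝ) ≤ 2)]
    apply max_le
    · simpa using h0f
    · have : 2 * (A * ((r:ℝ)+1) - Mb r - Mb (r+1)) ≤ 2 * A * ((r:ℝ)+1) - K := by
        linarith [hKle]
      linarith [h3]
  · -- upper bound on limsup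
    have h1 : limsup f atTop ≤ limsup g atTop :=
      limsup_le_limsup hfg hbdd_ge.isCoboundedUnder_le htg.isBoundedUnder_le
    rw [htg.limsup_eq] at h1
    linarith [h1, hKle, hMb1, hMb2]
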